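/- (Auxiliary-channel bounds on the information rate of a CC-QSC.) Let a CC-QSC {N^{y|x}} with finite alphabets X, Y, memory dimension d and initial density matrix ρ₀ be given, together with an auxiliary CC-QSC {N̂^{y|x}} on the same alphabets with memory dimension d̂ and initial density matrix ρ̂₀, a PMF Q on X, and n ≥ 1. Write Q⁽ⁿ⁾(x₁ⁿ) := ∏_{ℓ=1}^{n} Q(x_ℓ), P(y₁ⁿ|x₁ⁿ) := tr(N^{y_n|x_n}(⋯N^{y_1|x_1}(ρ₀)⋯)), P̂(y₁ⁿ|x₁ⁿ) := tr(N̂^{y_n|x_n}(⋯N̂^{y_1|x_1}(ρ̂₀)⋯)), (QP)(y₁ⁿ) := ∑_{x₁ⁿ} Q⁽ⁿ⁾(x₁ⁿ)·P(y₁ⁿ|x₁ⁿ), and (QP̂)(y₁ⁿ) := ∑_{x₁ⁿ} Q⁽ⁿ⁾(x₁ⁿ)·P̂(y₁ⁿ|x₁ⁿ). Assume P̂(y₁ⁿ|x₁ⁿ) > 0 whenever Q⁽ⁿ⁾(x₁ⁿ)·P(y₁ⁿ|x₁ⁿ) > 0. Define I⁽ⁿ⁾ := (1/n)·∑_{x₁ⁿ,y₁ⁿ}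 Q⁽ⁿ⁾·P·log(P/(QP)), the upper bound Ī⁽ⁿ⁾ := (1/n)·∑_{x₁ⁿ,y₁ⁿ} Q⁽ⁿ⁾·P·log(P/(QP̂)), and the lower bound Ĭ⁽ⁿ⁾ := (1/n)·∑_{x₁ⁿ,y₁ⁿ} Q⁽ⁿ⁾·P·log(P̂/(QP̂)), with the convention that terms with Q⁽ⁿ⁾(x₁ⁿ)·P(y₁ⁿ|x₁ⁿ) = 0 are 0. Then Ī⁽ⁿ⁾ − I⁽ⁿ⁾ = (1/n)·∑_{y₁ⁿ : (QP)(y₁ⁿ)>0} (QP)(y₁ⁿ)·log((QP)(y₁ⁿ)/(QP̂)(y₁ⁿ)) ≥ 0, and I⁽ⁿ⁾ − Ĭ⁽ⁿ⁾ = (1/n)·∑_{y₁ⁿ : (QP)(y₁ⁿ)>0} (QP)(y₁ⁿ)·∑_{x₁ⁿ : V(x₁ⁿ|y₁ⁿ)>0} V(x₁ⁿ|y₁ⁿ)·log(V(x₁ⁿ|y₁ⁿ)/V̂(x₁ⁿ|y₁ⁿ)) ≥ 0, where V(x₁ⁿ|y₁ⁿ) := Q⁽ⁿ⁾(x₁ⁿ)·P(y₁ⁿ|x₁ⁿ)/(QP)(y₁ⁿ)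 and V̂(x₁ⁿ|y₁ⁿ) := Q⁽ⁿ⁾(x₁ⁿ)·P̂(y₁ⁿ|x₁ⁿ)/(QP̂)(y₁ⁿ). In particular Ĭ⁽ⁿ⁾ ≤ I⁽ⁿ⁾ ≤ Ī⁽ⁿ⁾. -/

import Mathlib

open Matrix Finset

/-- `evolve Nmap ρ₀ n x y = N^{y_n|x_n}(⋯ N^{y_1|x_1}(ρ₀) ⋯)`:
the iterated application of the channel maps along the input/output sequences,
with `N^{y_1|x_1}` applied first. -/
noncomputable def evolve {X Y : Type} {d : ℕ}
    (Nmap : X → Y → Matrix (Fin d) (Fin d) ℂ → Matrix (Fin d) (Fin d) ℂ)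
    (ρ0 : Matrix (Fin d) (Fin d) ℂ) :
    (n : ℕ) → (Fin n → X) → (Fin n → Y) → Matrix (Fin d) (Fin d) ℂ
  | 0, _, _ => ρ0
  | n + 1, x, y =>
      Nmap (x (Fin.last n)) (y (Fin.last n))
        (evolve Nmap ρ0 n (fun i => x i.castSucc) (fun i => y i.castSucc))

section Helpers

open scoped ComplexOrder

/-- The real part of the trace of a PSD matrix is nonnegative. -/
lemma trace_re_nonneg' {d : ℕ} {A : Matrix (Fin d) (Fin d) ℂ} (hA : A.PosSemidef) :
    0 ≤ A.trace.re := by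
  obtain ⟨B, rfl⟩ : ∃ B : Matrix (Fin d) (Fin d) ℂ, A = Bᴴ * B := by
    open scoped MatrixOrder in exact CStarAlgebra.nonneg_iff_eq_star_mul_self.mp hA.nonneg
  simp only [Matrix.trace, Matrix.diag, Matrix.mul_apply, Matrix.conjTranspose_apply,
    Complex.re_sum]
  refine Finset.sum_nonneg fun i _ => Finset.sum_nonneg fun j _ => ?_
  have h : (star (B j i) * B j i).re = (B j i).re ^ 2 + (B j i).im ^ 2 := by
    simp [Complex.mul_re]; ring
  rw [h]; positivity

lemma chan_psd {d : ℕ} {K : Type} [Fintype K] (F : K → Matrix (Fin d) (Fin d) ℂ)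
    {ρ : Matrix (Fin d) (Fin d) ℂ} (hρ : ρ.PosSemidef) :
    (∑ k : K, F k * ρ * (F k)ᴴ).PosSemidef := by
  classical
  refine Finset.sum_induction _ _ (fun a b ha hb => ha.add hb) Matrix.PosSemidef.zero ?_
  intro k _
  exact hρ.mul_mul_conjTranspose_same (F k)

lemma evolve_psd {X Y : Type} {d : ℕ} (κ : X → Y → Type) [∀ x y, Fintype (κ x y)]
    (Fk : ∀ (x : X) (y : Y), κ x y → Matrix (Fin d) (Fin d) ℂ)
    {ρ0 : Matrix (Fin d) (Fin d) ℂ} (hρ0 : ρ0.PosSemidef) :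
    ∀ (n : ℕ) (x : Fin n → X) (y : Fin n → Y),
      (evolve (fun x' y' ρ' => ∑ k : κ x' y', Fk x' y' k * ρ' * (Fk x' y' k)ᴴ)
        ρ0 n x y).PosSemidef := by
  intro n
  induction n with
  | zero => intro x y; simp only [evolve]; exact hρ0
  | succ m ih =>
    intro x y
    simp only [evolve]
    exact chan_psd _ (ih _ _)

lemma sum_snoc {Y M : Type} [Fintype Y] [AddCommMonoid M] {n : ℕ}
    (g : (Fin (n + 1) → Y) → M) :
    ∑ y : Fin (n + 1) → Y, g y = ∑ c : Y, ∑ y' : Fin n → Y, g (Fin.snoc y' c) := by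
  rw [← Fintype.sum_equiv (Fin.snocEquiv fun _ => Y)
    (fun p : Y × (Fin n → Y) => g (Fin.snoc p.2 p.1)) g fun p => rfl]
  rw [Fintype.sum_prod_type]

lemma sum_prod_eq_one {X : Type} [Fintype X] (Q : X → ℝ) (hQ1 : ∑ x : X, Q x = 1) :
    ∀ n : ℕ, ∑ x : Fin n → X, ∏ ℓ : Fin n, Q (x ℓ) = 1 := by
  intro n
  induction n with
  | zero => simp
  | succ m ih =>
    rw [sum_snoc (fun x : Fin (m + 1) → X => ∏ ℓ : Fin (m + 1), Q (x ℓ))]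
    have h : ∀ (c : X) (x' : Fin m → X),
        ∏ ℓ : Fin (m + 1), Q ((Fin.snoc x' c : Fin (m + 1) → X) ℓ) =
          (∏ ℓ : Fin m, Q (x' ℓ)) * Q c := by
      intro c x'
      rw [Fin.prod_univ_castSucc]
      simp [Fin.snoc_castSucc, Fin.snoc_last]
    simp_rw [h, ← Finset.sum_mul, ih, one_mul]
    exact hQ1

lemma evolve_snoc {X Y : Type} {d : ℕ}
    (Nmap : X → Y → Matrix (Fin d) (Fin d) ℂ → Matrix (Fin d) (Fin d) ℂ)
    (ρ0 : Matrix (Fin d) (Fin d) ℂ) (m : ℕ) (x : Fin (m + 1) → X)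
    (y' : Fin m → Y) (c : Y) :
    evolve Nmap ρ0 (m + 1) x (Fin.snoc y' c) =
      Nmap (x (Fin.last m)) c (evolve Nmap ρ0 m (fun i => x i.castSucc) y') := by
  simp only [evolve, Fin.snoc_last, Fin.snoc_castSucc]

lemma step_trace {X Y : Type} [Fintype Y] {d : ℕ} (κ : X → Y → Type) [∀ x y, Fintype (κ x y)]
    (Fk : ∀ (x : X) (y : Y), κ x y → Matrix (Fin d) (Fin d) ℂ) (x : X)
    (hx : ∑ y : Y, ∑ k : κ x y, (Fk x y k)ᴴ * Fk x y k = 1)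
    (ρ : Matrix (Fin d) (Fin d) ℂ) :
    ∑ y : Y, (∑ k : κ x y, Fk x y k * ρ * (Fk x y k)ᴴ).trace = ρ.trace := by
  have h1 : ∀ (y : Y) (k : κ x y),
      (Fk x y k * ρ * (Fk x y k)ᴴ).trace = ((Fk x y k)ᴴ * Fk x y k * ρ).trace := by
    intro y k
    rw [Matrix.trace_mul_cycle]
  calc ∑ y : Y, (∑ k : κ x y, Fk x y k * ρ * (Fk x y k)ᴴ).trace
      = ∑ y : Y, ∑ k : κ x y, ((Fk x y k)ᴴ * Fk x y k * ρ).trace := by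
        simp_rw [Matrix.trace_sum]
        exact Finset.sum_congr rfl fun y _ => Finset.sum_congr rfl fun k _ => h1 y k
    _ = ((∑ y : Y, ∑ k : κ x y, (Fk x y k)ᴴ * Fk x y k) * ρ).trace := by
        simp_rw [Finset.sum_mul, Matrix.trace_sum]
    _ = ρ.trace := by rw [hx, one_mul]

lemma evolve_trace_sum {X Y : Type} [Fintype Y] {d : ℕ} (κ : X → Y → Type)
    [∀ x y, Fintype (κ x y)]
    (Fk : ∀ (x : X) (y : Y), κ x y → Matrix (Fin d) (Fin d) ℂ)
    (hnorm : ∀ x : X, ∑ y : Y, ∑ k : κ x y, (Fk x y k)ᴴ * Fk x y k = 1)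
    (ρ0 : Matrix (Fin d) (Fin d) ℂ) :
    ∀ (n : ℕ) (x : Fin n → X),
      ∑ y : Fin n → Y,
        (evolve (fun x' y' ρ' => ∑ k : κ x' y', Fk x' y' k * ρ' * (Fk x' y' k)ᴴ)
          ρ0 n x y).trace = ρ0.trace := by
  intro n
  induction n with
  | zero => intro x; simp [evolve]
  | succ m ih =>
    intro x
    rw [sum_snoc]
    simp_rw [evolve_snoc]
    rw [Finset.sum_comm]
    exact (Finset.sum_congr rfl fun y' _ =>
      step_trace κ Fk (x (Fin.last m)) (hnorm _) _).trans (ih _)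

/-- Gibbs-type inequality building block. -/
lemma sub_le_mul_log {p q : ℝ} (hp : 0 < p) (hq : 0 < q) :
    p - q ≤ p * Real.log (p / q) := by
  have h := Real.log_le_sub_one_of_pos (div_pos hq hp)
  have h2 : Real.log (q / p) = -Real.log (p / q) := by
    rw [Real.log_div hq.ne' hp.ne', Real.log_div hp.ne' hq.ne']; ring
  rw [h2] at h
  have h4 : p * (1 - q / p) ≤ p * Real.log (p / q) :=
    mul_le_mul_of_nonneg_left (by linarith) hp.le
  have h5 : p * (1 - q / p) = p - q := by field_simp
  linarith

/-- Abstract form of the auxiliary-channel bounds, for arbitrary finite weights. -/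
lemma key_bounds {A B : Type} [Fintype A] [Fintype B]
    (W : A → ℝ) (P Ph : A → B → ℝ) (QP QPh : B → ℝ)
    (hW : ∀ a, 0 ≤ W a) (hW1 : ∑ a : A, W a = 1)
    (hP : ∀ a b, 0 ≤ P a b) (hP1 : ∀ a, ∑ b : B, P a b = 1)
    (hPh : ∀ a b, 0 ≤ Ph a b) (hPh1 : ∀ a, ∑ b : B, Ph a b = 1)
    (hs : ∀ a b, 0 < W a * P a b → 0 < Ph a b)
    (hQP : ∀ b, QP b = ∑ a : A, W a * P a b)
    (hQPh : ∀ b, QPh b = ∑ a : A, W a * Ph a b) :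
    ((∑ a : A, ∑ b : B, W a * P a b * Real.log (P a b / QPh b)) -
        (∑ a : A, ∑ b : B, W a * P a b * Real.log (P a b / QP b)) =
      ∑ b ∈ Finset.univ.filter (fun b : B => 0 < QP b),
        QP b * Real.log (QP b / QPh b)) ∧
    (0 ≤ ∑ b ∈ Finset.univ.filter (fun b : B => 0 < QP b),
        QP b * Real.log (QP b / QPh b)) ∧
    ((∑ a : A, ∑ b : B, W a * P a b * Real.log (P a b / QP b)) -
        (∑ a : A, ∑ b : B, W a * P a b * Real.log (Ph a b / QPh b)) =
      ∑ b ∈ Finset.univ.filter (fun b : B => 0 < QP b),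
        QP b * ∑ a ∈ Finset.univ.filter (fun a : A => 0 < W a * P a b / QP b),
          (W a * P a b / QP b) *
            Real.log ((W a * P a b / QP b) / (W a * Ph a b / QPh b))) ∧
    (0 ≤ ∑ b ∈ Finset.univ.filter (fun b : B => 0 < QP b),
        QP b * ∑ a ∈ Finset.univ.filter (fun a : A => 0 < W a * P a b / QP b),
          (W a * P a b / QP b) *
            Real.log ((W a * P a b / QP b) / (W a * Ph a b / QPh b))) := by
  have hWP2 : ∀ a b, 0 < W a * P a b → 0 < W a ∧ 0 < P a b := fun a b h =>
    (mul_pos_iff.mp h).resolve_right fun h' => (not_lt.mpr (hW a)) h'.1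
  have hQPnn : ∀ b, 0 ≤ QP b := fun b => (hQP b) ▸
    Finset.sum_nonneg fun a _ => mul_nonneg (hW a) (hP a b)
  have hQPhnn : ∀ b, 0 ≤ QPh b := fun b => (hQPh b) ▸
    Finset.sum_nonneg fun a _ => mul_nonneg (hW a) (hPh a b)
  have hQPhpos : ∀ b, 0 < QP b → 0 < QPh b := by
    intro b hb
    rw [hQP b] at hb
    obtain ⟨a, -, ha⟩ :=
      Finset.exists_lt_of_sum_lt (f := fun _ : A => (0 : ℝ)) (by simpa using hb)
    have hPh' := hs a b ha
    have hWa : 0 < W a := (hWP2 a b ha).1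
    rw [hQPh b]
    exact lt_of_lt_of_le (mul_pos hWa hPh')
      (Finset.single_le_sum (fun a' _ => mul_nonneg (hW a') (hPh a' b)) (Finset.mem_univ a))
  have hQPzero : ∀ b, ¬0 < QP b → ∀ a, W a * P a b = 0 := by
    intro b hb a
    have h0 : QP b = 0 := le_antisymm (not_lt.mp hb) (hQPnn b)
    rw [hQP b] at h0
    exact (Finset.sum_eq_zero_iff_of_nonneg
      (fun a _ => mul_nonneg (hW a) (hP a b))).mp h0 a (Finset.mem_univ a)
  have hQPsum : ∑ b : B, QP b = 1 := by
    simp_rw [hQP]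
    rw [Finset.sum_comm]
    simp_rw [← Finset.mul_sum, hP1, mul_one]
    exact hW1
  have hQPhsum : ∑ b : B, QPh b = 1 := by
    simp_rw [hQPh]
    rw [Finset.sum_comm]
    simp_rw [← Finset.mul_sum, hPh1, mul_one]
    exact hW1
  have hfilt1 : ∑ b ∈ Finset.univ.filter (fun b : B => 0 < QP b), QP b = 1 := by
    rw [Finset.sum_filter_of_ne fun b _ hne => lt_of_le_of_ne (hQPnn b) (Ne.symm hne)]
    exact hQPsum
  -- Conclusion 2
  have c2 : 0 ≤ ∑ b ∈ Finset.univ.filter (fun b : B => 0 < QP b),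
      QP b * Real.log (QP b / QPh b) := by
    have hsub : ∀ b ∈ Finset.univ.filter (fun b : B => 0 < QP b),
        QP b - QPh b ≤ QP b * Real.log (QP b / QPh b) := by
      intro b hb
      rw [Finset.mem_filter] at hb
      exact sub_le_mul_log hb.2 (hQPhpos b hb.2)
    have h2 : ∑ b ∈ Finset.univ.filter (fun b : B => 0 < QP b), QPh b ≤ 1 := by
      rw [← hQPhsum]
      exact Finset.sum_le_sum_of_subset_of_nonneg (Finset.filter_subset _ _)
        fun b _ _ => hQPhnn b
    calc (0 : ℝ) ≤ ∑ b ∈ Finset.univ.filter (fun b : B => 0 < QP b), (QP b - QPh b) := by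
          rw [Finset.sum_sub_distrib, hfilt1]; linarith
      _ ≤ _ := Finset.sum_le_sum hsub
  -- Conclusion 1
  have key1 : ∀ b : B,
      (∑ a : A, (W a * P a b * Real.log (P a b / QPh b) -
        W a * P a b * Real.log (P a b / QP b))) =
      if 0 < QP b then QP b * Real.log (QP b / QPh b) else 0 := by
    intro b
    by_cases hb : 0 < QP b
    · rw [if_pos hb]
      have hqh := hQPhpos b hb
      have hterm : ∀ a ∈ (Finset.univ : Finset A),
          W a * P a b * Real.log (P a b / QPh b) - W a * P a b * Real.log (P a b / QP b) =
          W a * P a b * Real.log (QP b / QPh b) := by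
        intro a _
        rcases eq_or_lt_of_le (mul_nonneg (hW a) (hP a b)) with h0 | h0
        · rw [← h0]; ring
        · have hp := (hWP2 a b h0).2
          rw [Real.log_div hp.ne' hqh.ne', Real.log_div hp.ne' hb.ne',
            Real.log_div hb.ne' hqh.ne']
          ring
      rw [Finset.sum_congr rfl hterm, ← Finset.sum_mul, ← hQP b]
    · rw [if_neg hb]
      refine Finset.sum_eq_zero fun a _ => ?_
      rw [hQPzero b hb a]; ring
  have c1 : (∑ a : A, ∑ b : B, W a * P a b * Real.log (P a b / QPh b)) -
      (∑ a : A, ∑ b : B, W a * P a b * Real.log (P a b / QP b)) =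
      ∑ b ∈ Finset.univ.filter (fun b : B => 0 < QP b),
        QP b * Real.log (QP b / QPh b) := by
    rw [Finset.sum_filter]
    simp_rw [← Finset.sum_sub_distrib]
    rw [Finset.sum_comm]
    exact Finset.sum_congr rfl fun b _ => key1 b
  -- Conclusion 3
  have key3 : ∀ b : B,
      (∑ a : A, (W a * P a b * Real.log (P a b / QP b) -
        W a * P a b * Real.log (Ph a b / QPh b))) =
      if 0 < QP b then
        QP b * ∑ a ∈ Finset.univ.filter (fun a : A => 0 < W a * P a b / QP b),
          (W a * P a b / QP b) *
            Real.log ((W a * P a b / QP b) / (W a * Ph a b / QPh b))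
      else 0 := by
    intro b
    by_cases hb : 0 < QP b
    · rw [if_pos hb, Finset.mul_sum, Finset.sum_filter]
      have hqh := hQPhpos b hb
      refine Finset.sum_congr rfl fun a _ => ?_
      rcases eq_or_lt_of_le (mul_nonneg (hW a) (hP a b)) with h0 | h0
      · have hv : ¬0 < W a * P a b / QP b := by
          rw [← h0, zero_div]; exact lt_irrefl 0
        rw [if_neg hv, ← h0]; ring
      · obtain ⟨hWa, hPa⟩ := hWP2 a b h0
        have hPha := hs a b h0
        have hv : 0 < W a * P a b / QP b := div_pos h0 hb
        have hvh : 0 < W a * Ph a b / QPh b := div_pos (mul_pos hWa hPha) hqh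
        rw [if_pos hv]
        have hc : QP b * (W a * P a b / QP b *
            Real.log ((W a * P a b / QP b) / (W a * Ph a b / QPh b))) =
            W a * P a b *
              Real.log ((W a * P a b / QP b) / (W a * Ph a b / QPh b)) := by
          field_simp
        rw [hc, Real.log_div hv.ne' hvh.ne', Real.log_div h0.ne' hb.ne',
          Real.log_div (mul_pos hWa hPha).ne' hqh.ne', Real.log_mul hWa.ne' hPa.ne',
          Real.log_mul hWa.ne' hPha.ne', Real.log_div hPa.ne' hb.ne',
          Real.log_div hPha.ne' hqh.ne']
        ring
    · rw [if_neg hb]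
      refine Finset.sum_eq_zero fun a _ => ?_
      rw [hQPzero b hb a]; ring
  have c3 : (∑ a : A, ∑ b : B, W a * P a b * Real.log (P a b / QP b)) -
      (∑ a : A, ∑ b : B, W a * P a b * Real.log (Ph a b / QPh b)) =
      ∑ b ∈ Finset.univ.filter (fun b : B => 0 < QP b),
        QP b * ∑ a ∈ Finset.univ.filter (fun a : A => 0 < W a * P a b / QP b),
          (W a * P a b / QP b) *
            Real.log ((W a * P a b / QP b) / (W a * Ph a b / QPh b)) := by
    rw [Finset.sum_filter]
    simp_rw [← Finset.sum_sub_distrib]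
    rw [Finset.sum_comm]
    exact Finset.sum_congr rfl fun b _ => key3 b
  -- Conclusion 4
  have c4 : 0 ≤ ∑ b ∈ Finset.univ.filter (fun b : B => 0 < QP b),
      QP b * ∑ a ∈ Finset.univ.filter (fun a : A => 0 < W a * P a b / QP b),
        (W a * P a b / QP b) *
          Real.log ((W a * P a b / QP b) / (W a * Ph a b / QPh b)) := by
    refine Finset.sum_nonneg fun b hb => ?_
    rw [Finset.mem_filter] at hb
    have hbp := hb.2
    have hqh := hQPhpos b hbp
    refine mul_nonneg (hQPnn b) ?_
    have hVcpos : ∀ a ∈ Finset.univ.filter (fun a : A => 0 < W a * P a b / QP b),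
        0 < W a * P a b := by
      intro a ha
      rw [Finset.mem_filter] at ha
      rcases eq_or_lt_of_le (mul_nonneg (hW a) (hP a b)) with h0 | h0
      · exfalso
        have := ha.2
        rw [← h0, zero_div] at this
        exact lt_irrefl 0 this
      · exact h0
    have hVhpos : ∀ a ∈ Finset.univ.filter (fun a : A => 0 < W a * P a b / QP b),
        0 < W a * Ph a b / QPh b := by
      intro a ha
      have h0 := hVcpos a ha
      exact div_pos (mul_pos (hWP2 a b h0).1 (hs a b h0)) hqh
    have hsum1 : ∑ a ∈ Finset.univ.filter (fun a : A => 0 < W a * P a b / QP b),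
        W a * P a b / QP b = 1 := by
      rw [Finset.sum_filter_of_ne fun a _ hne => lt_of_le_of_ne
        (div_nonneg (mul_nonneg (hW a) (hP a b)) hbp.le) (Ne.symm hne)]
      rw [← Finset.sum_div, ← hQP b, div_self hbp.ne']
    have hsum2 : ∑ a ∈ Finset.univ.filter (fun a : A => 0 < W a * P a b / QP b),
        W a * Ph a b / QPh b ≤ 1 := by
      calc ∑ a ∈ Finset.univ.filter (fun a : A => 0 < W a * P a b / QP b),
            W a * Ph a b / QPh b
          ≤ ∑ a : A, W a * Ph a b / QPh b :=
            Finset.sum_le_sum_of_subset_of_nonneg (Finset.filter_subset _ _)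
              fun a _ _ => div_nonneg (mul_nonneg (hW a) (hPh a b)) hqh.le
        _ = 1 := by rw [← Finset.sum_div, ← hQPh b, div_self hqh.ne']
    calc (0 : ℝ) ≤ ∑ a ∈ Finset.univ.filter (fun a : A => 0 < W a * P a b / QP b),
          (W a * P a b / QP b - W a * Ph a b / QPh b) := by
          rw [Finset.sum_sub_distrib, hsum1]; linarith
      _ ≤ _ := Finset.sum_le_sum fun a ha =>
          sub_le_mul_log (Finset.mem_filter.mp ha).2 (hVhpos a ha)
  exact ⟨c1, c2, c3, c4⟩

end Helpers

open scoped ComplexOrder in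
/-- Auxiliary-channel upper and lower bounds on the information rate of a CC-QSC:
`Ī⁽ⁿ⁾ − I⁽ⁿ⁾` is the normalized relative entropy of the output distributions (hence `≥ 0`)
and `I⁽ⁿ⁾ − Ĭ⁽ⁿ⁾` is the normalized average relative entropy of the backward channels
(hence `≥ 0`); in particular `Ĭ⁽ⁿ⁾ ≤ I⁽ⁿ⁾ ≤ Ī⁽ⁿ⁾`. -/
theorem stmt19 {X Y : Type} [Fintype X] [Fintype Y] [DecidableEq X] [DecidableEq Y]
    (Q : X → ℝ) (hQ0 : ∀ x, 0 ≤ Q x) (hQ1 : ∑ x : X, Q x = 1)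
    (d : ℕ) (κ : X → Y → Type) [∀ x y, Fintype (κ x y)]
    (Fk : ∀ (x : X) (y : Y), κ x y → Matrix (Fin d) (Fin d) ℂ)
    (hnorm : ∀ x : X, ∑ y : Y, ∑ k : κ x y, (Fk x y k)ᴴ * Fk x y k = 1)
    (ρ0 : Matrix (Fin d) (Fin d) ℂ) (hρ0 : ρ0.PosSemidef) (hρ0tr : ρ0.trace = 1)
    (dh : ℕ) (κh : X → Y → Type) [∀ x y, Fintype (κh x y)]
    (Fkh : ∀ (x : X) (y : Y), κh x y → Matrix (Fin dh) (Fin dh) ℂ)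
    (hnormh : ∀ x : X, ∑ y : Y, ∑ k : κh x y, (Fkh x y k)ᴴ * Fkh x y k = 1)
    (ρ0h : Matrix (Fin dh) (Fin dh) ℂ) (hρ0h : ρ0h.PosSemidef) (hρ0htr : ρ0h.trace = 1)
    (n : ℕ) (hn : 1 ≤ n)
    (hsupp : ∀ (x : Fin n → X) (y : Fin n → Y),
      0 < (∏ ℓ : Fin n, Q (x ℓ)) *
          ((evolve (fun x' y' ρ' => ∑ k : κ x' y', Fk x' y' k * ρ' * (Fk x' y' k)ᴴ)
              ρ0 n x y).trace).re →
      0 < ((evolve (fun x' y' ρ' => ∑ k : κh x' y', Fkh x' y' k * ρ' * (Fkh x' y' k)ᴴ)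
              ρ0h n x y).trace).re) :
    let Qn : (Fin n → X) → ℝ := fun x => ∏ ℓ : Fin n, Q (x ℓ);
    let P : (Fin n → X) → (Fin n → Y) → ℝ := fun x y =>
      ((evolve (fun x' y' ρ' => ∑ k : κ x' y', Fk x' y' k * ρ' * (Fk x' y' k)ᴴ)
          ρ0 n x y).trace).re;
    let Ph : (Fin n → X) → (Fin n → Y) → ℝ := fun x y =>
      ((evolve (fun x' y' ρ' => ∑ k : κh x' y', Fkh x' y' k * ρ' * (Fkh x' y' k)ᴴ)
          ρ0h n x y).trace).re;
    let QP : (Fin n → Y) → ℝ := fun y => ∑ x : Fin n → X, Qn x * P x y;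
    let QPh : (Fin n → Y) → ℝ := fun y => ∑ x : Fin n → X, Qn x * Ph x y;
    let In : ℝ := (1 / (n : ℝ)) *
      ∑ x : Fin n → X, ∑ y : Fin n → Y, Qn x * P x y * Real.log (P x y / QP y);
    let Iup : ℝ := (1 / (n : ℝ)) *
      ∑ x : Fin n → X, ∑ y : Fin n → Y, Qn x * P x y * Real.log (P x y / QPh y);
    let Ilow : ℝ := (1 / (n : ℝ)) *
      ∑ x : Fin n → X, ∑ y : Fin n → Y, Qn x * P x y * Real.log (Ph x y / QPh y);
    let Vc : (Fin n → X) → (Fin n → Y) → ℝ := fun x y => Qn x * P x y / QP y;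
    let Vh : (Fin n → X) → (Fin n → Y) → ℝ := fun x y => Qn x * Ph x y / QPh y;
    (Iup - In = (1 / (n : ℝ)) *
        ∑ y ∈ univ.filter (fun y : Fin n → Y => 0 < QP y),
          QP y * Real.log (QP y / QPh y)) ∧
    0 ≤ Iup - In ∧
    (In - Ilow = (1 / (n : ℝ)) *
        ∑ y ∈ univ.filter (fun y : Fin n → Y => 0 < QP y),
          QP y * ∑ x ∈ univ.filter (fun x : Fin n → X => 0 < Vc x y),
            Vc x y * Real.log (Vc x y / Vh x y)) ∧
    0 ≤ In - Ilow ∧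
    Ilow ≤ In ∧ In ≤ Iup := by
  intro Qn P Ph QP QPh In Iup Ilow Vc Vh
  have hc : (0 : ℝ) ≤ 1 / (n : ℝ) := by positivity
  have hQnn : ∀ x, 0 ≤ Qn x := fun x => Finset.prod_nonneg fun ℓ _ => hQ0 _
  have hQn1 : ∑ x : Fin n → X, Qn x = 1 := sum_prod_eq_one Q hQ1 n
  have hPnn : ∀ x y, 0 ≤ P x y := fun x y => trace_re_nonneg' (evolve_psd κ Fk hρ0 n x y)
  have hPhnn : ∀ x y, 0 ≤ Ph x y := fun x y =>
    trace_re_nonneg' (evolve_psd κh Fkh hρ0h n x y)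
  have hP1 : ∀ x, ∑ y : Fin n → Y, P x y = 1 := by
    intro x
    have h := evolve_trace_sum κ Fk hnorm ρ0 n x
    rw [hρ0tr] at h
    have h2 := congrArg Complex.re h
    rw [Complex.re_sum] at h2
    simpa using h2
  have hPh1 : ∀ x, ∑ y : Fin n → Y, Ph x y = 1 := by
    intro x
    have h := evolve_trace_sum κh Fkh hnormh ρ0h n x
    rw [hρ0htr] at h
    have h2 := congrArg Complex.re h
    rw [Complex.re_sum] at h2
    simpa using h2
  obtain ⟨k1, k2, k3, k4⟩ := key_bounds Qn P Ph QP QPh hQnn hQn1 hPnn hP1 hPhnn hPh1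
    hsupp (fun b => rfl) (fun b => rfl)
  have e1 : Iup - In = (1 / (n : ℝ)) *
      ∑ y ∈ univ.filter (fun y : Fin n → Y => 0 < QP y),
        QP y * Real.log (QP y / QPh y) :=
    (mul_sub (1 / (n : ℝ)) _ _).symm.trans (congrArg (fun t => (1 / (n : ℝ)) * t) k1)
  have e3 : In - Ilow = (1 / (n : ℝ)) *
      ∑ y ∈ univ.filter (fun y : Fin n → Y => 0 < QP y),
        QP y * ∑ x ∈ univ.filter (fun x : Fin n → X => 0 < Vc x y),
          Vc x y * Real.log (Vc x y / Vh x y) :=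
    (mul_sub (1 / (n : ℝ)) _ _).symm.trans (congrArg (fun t => (1 / (n : ℝ)) * t) k3)
  have h2 : 0 ≤ Iup - In := le_of_le_of_eq (mul_nonneg hc k2) e1.symm
  have h4 : 0 ≤ In - Ilow := le_of_le_of_eq (mul_nonneg hc k4) e3.symm
  exact ⟨e1, h2, e3, h4, sub_nonneg.mp h4, sub_nonneg.mp h2⟩
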